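/- Let S, T be bounded operators on H with S* = −S, Γ∘T*∘Γ = T, and T Hilbert–Schmidt, and let Â be the block operator Â(φ,ψ) = (Sφ + T̄ψ, Tφ + S̄ψ) on H ⊕ H. Then for every t ∈ ℝ: exp(tÂ) ∘ J ∘ exp(tÂ)* = J and exp(tÂ)* ∘ J ∘ exp(tÂ) = J, and the lower-left block (exp(tÂ))₂₁ of exp(tÂ) is a Hilbert–Schmidt operator on H. (In other words, exp(tÂ) belongs to Sp₂ for all t.) -/

import Mathlib

noncomputable section

open ContinuousLinearMap Filter
open scoped Topology

/-- `conj ∘ conj = id` as a `RingHomCompTriple`, so that conjugate-linear maps compose. -/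
instance : RingHomCompTriple (starRingEnd ℂ) (starRingEnd ℂ) (RingHom.id ℂ) :=
  ⟨RingHom.ext fun z => Complex.conj_conj z⟩

variable {H : Type*} [NormedAddCommGroup H] [InnerProductSpace ℂ H] [CompleteSpace H]

/-- For a conjugation `Γ` (a conjugate-linear isometric involution) and a bounded operator `X`,
the operator `X̄ = Γ ∘ X ∘ Γ`. -/
def conjOp (Γ : H →ₛₗᵢ[starRingEnd ℂ] H) (X : H →L[ℂ] H) : H →L[ℂ] H :=
  Γ.toContinuousLinearMap.comp (X.comp Γ.toContinuousLinearMap)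

/-- The Hilbert space direct sum `H ⊕ H`. -/
abbrev H2 (H : Type*) [NormedAddCommGroup H] [InnerProductSpace ℂ H] : Type _ :=
  WithLp 2 (H × H)

/-- The element `(φ, ψ)` of `H ⊕ H`. -/
def mk2 (φ ψ : H) : H2 H := (WithLp.equiv 2 (H × H)).symm (φ, ψ)

/-- The inclusion `f ↦ (f, 0)` of `H` into `H ⊕ H`. -/
def inc1 : H →L[ℂ] H2 H :=
  (WithLp.prodContinuousLinearEquiv 2 ℂ H H).symm.toContinuousLinearMap.comp
    (ContinuousLinearMap.inl ℂ H H)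

/-- The inclusion `f ↦ (0, f)` of `H` into `H ⊕ H`. -/
def inc2 : H →L[ℂ] H2 H :=
  (WithLp.prodContinuousLinearEquiv 2 ℂ H H).symm.toContinuousLinearMap.comp
    (ContinuousLinearMap.inr ℂ H H)

/-- The projection `(φ, ψ) ↦ φ` of `H ⊕ H` onto the first coordinate. -/
def proj1 : H2 H →L[ℂ] H :=
  (ContinuousLinearMap.fst ℂ H H).comp
    (WithLp.prodContinuousLinearEquiv 2 ℂ H H).toContinuousLinearMap

/-- The projection `(φ, ψ) ↦ ψ` of `H ⊕ H` onto the second coordinate. -/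
def proj2 : H2 H →L[ℂ] H :=
  (ContinuousLinearMap.snd ℂ H H).comp
    (WithLp.prodContinuousLinearEquiv 2 ℂ H H).toContinuousLinearMap

/-- The block `B₁₁ f = P₁ B (f, 0)` of an operator `B` on `H ⊕ H`. -/
def blk11 (B : H2 H →L[ℂ] H2 H) : H →L[ℂ] H := proj1.comp (B.comp inc1)

/-- The block `B₂₁ f = P₂ B (f, 0)` of an operator `B` on `H ⊕ H`. -/
def blk21 (B : H2 H →L[ℂ] H2 H) : H →L[ℂ] H := proj2.comp (B.comp inc1)

/-- The block `B₁₂ f = P₁ B (0, f)` of an operator `B` on `H ⊕ H`. -/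
def blk12 (B : H2 H →L[ℂ] H2 H) : H →L[ℂ] H := proj1.comp (B.comp inc2)

/-- The block `B₂₂ f = P₂ B (0, f)` of an operator `B` on `H ⊕ H`. -/
def blk22 (B : H2 H →L[ℂ] H2 H) : H →L[ℂ] H := proj2.comp (B.comp inc2)

/-- `X` is Hilbert–Schmidt with respect to the Hilbert basis `b`. -/
def IsHS {E : Type*} [NormedAddCommGroup E] [InnerProductSpace ℂ E] {ι : Type*}
    (b : HilbertBasis ι ℂ E) (X : E →L[ℂ] E) : Prop :=
  Summable fun i => ‖X (b i)‖ ^ 2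

/-- The Hilbert–Schmidt norm `‖X‖₂ = (∑ᵢ ‖X eᵢ‖²)^{1/2}` with respect to the Hilbert basis `b`. -/
def hsNorm {E : Type*} [NormedAddCommGroup E] [InnerProductSpace ℂ E] {ι : Type*}
    (b : HilbertBasis ι ℂ E) (X : E →L[ℂ] E) : ℝ :=
  Real.sqrt (∑' i, ‖X (b i)‖ ^ 2)


section Aux

set_option linter.unusedSectionVars false

open scoped InnerProductSpace
open NormedSpace

variable {H : Type*} [NormedAddCommGroup H] [InnerProductSpace ℂ H] [CompleteSpace H]

lemma gamma_inner (Γ : H →ₛₗᵢ[starRingEnd ℂ] H) (x y : H) :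
    ⟪Γ x, Γ y⟫_ℂ = ⟪y, x⟫_ℂ := by
  have keyI : Complex.I • Γ y = Γ (-(Complex.I • y)) := by
    rw [← neg_smul, Γ.map_smulₛₗ]
    simp
  have keyI' : Complex.I • Γ x = Γ (-(Complex.I • x)) := by
    rw [← neg_smul, Γ.map_smulₛₗ]
    simp
  have e1 : ‖Γ x + Γ y‖ = ‖x + y‖ := by rw [← Γ.map_add, Γ.norm_map]
  have e2 : ‖Γ x - Γ y‖ = ‖x - y‖ := by rw [← Γ.map_sub, Γ.norm_map]
  have e3 : ‖Γ x - Complex.I • Γ y‖ = ‖x + Complex.I • y‖ := by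
    rw [keyI, ← Γ.map_sub, Γ.norm_map, sub_neg_eq_add]
  have e4 : ‖Γ x + Complex.I • Γ y‖ = ‖x - Complex.I • y‖ := by
    rw [keyI, ← Γ.map_add, Γ.norm_map, ← sub_eq_add_neg]
  have e5 : ‖y - Complex.I • x‖ = ‖x + Complex.I • y‖ := by
    have h : y - Complex.I • x = (-Complex.I) • (x + Complex.I • y) := by
      rw [smul_add, smul_smul]
      simp [neg_smul]
      module
    rw [h, norm_smul]
    simp
  have e6 : ‖y + Complex.I • x‖ = ‖x - Complex.I • y‖ := by
    have h : y + Complex.I • x = Complex.I • (x - Complex.I • y) := by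
      rw [smul_sub, smul_smul]
      simp [neg_smul]
      module
    rw [h, norm_smul]
    simp
  rw [inner_eq_sum_norm_sq_div_four (𝕜 := ℂ) (Γ x) (Γ y),
    inner_eq_sum_norm_sq_div_four (𝕜 := ℂ) y x]
  simp only [RCLike.I_to_complex]
  rw [e1, e2, e3, e4, e5, e6, show ‖y + x‖ = ‖x + y‖ from by rw [add_comm],
    show ‖y - x‖ = ‖x - y‖ from norm_sub_rev y x]

lemma gamma_flip (Γ : H →ₛₗᵢ[starRingEnd ℂ] H) (hΓ : ∀ x, Γ (Γ x) = x) (x y : H) :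
    ⟪Γ x, y⟫_ℂ = ⟪Γ y, x⟫_ℂ := by
  conv_lhs => rw [← hΓ y]
  exact gamma_inner Γ x (Γ y)

lemma conjOp_apply (Γ : H →ₛₗᵢ[starRingEnd ℂ] H) (X : H →L[ℂ] H) (z : H) :
    conjOp Γ X z = Γ (X (Γ z)) := rfl

lemma conjOp_conjOp (Γ : H →ₛₗᵢ[starRingEnd ℂ] H) (hΓ : ∀ x, Γ (Γ x) = x)
    (X : H →L[ℂ] H) : conjOp Γ (conjOp Γ X) = X := by
  ext z
  simp [conjOp_apply, hΓ]

lemma adjoint_conjOp (Γ : H →ₛₗᵢ[starRingEnd ℂ] H) (hΓ : ∀ x, Γ (Γ x) = x)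
    (X : H →L[ℂ] H) :
    ContinuousLinearMap.adjoint (conjOp Γ X) = conjOp Γ (ContinuousLinearMap.adjoint X) := by
  refine (((ContinuousLinearMap.eq_adjoint_iff _ _).2 ?_)).symm
  intro x y
  rw [conjOp_apply, conjOp_apply, gamma_flip Γ hΓ, ContinuousLinearMap.adjoint_inner_right,
    ← inner_conj_symm x (Γ (X (Γ y))), gamma_flip Γ hΓ (X (Γ y)) x]
  exact (inner_conj_symm _ _).symm

section Blocks

lemma inc1_eq (f : H) : (inc1 f : H2 H) = mk2 f 0 := rfl

lemma inc2_eq (f : H) : (inc2 f : H2 H) = mk2 0 f := rfl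

lemma proj1_mk2 (φ ψ : H) : proj1 (mk2 φ ψ) = φ := rfl

lemma proj2_mk2 (φ ψ : H) : proj2 (mk2 φ ψ) = ψ := rfl

lemma mk2_add (a b c d : H) : mk2 a b + mk2 c d = mk2 (a + c) (b + d) := rfl

lemma mk2_neg (a b : H) : -(mk2 a b) = mk2 (-a) (-b) := rfl

lemma mk2_sub (a b c d : H) : mk2 a b - mk2 c d = mk2 (a - c) (b - d) := rfl

lemma mk2_eq_mk2_iff {a b c d : H} : mk2 a b = mk2 c d ↔ a = c ∧ b = d := by
  constructor
  · intro h
    exact ⟨congrArg proj1 h, congrArg proj2 h⟩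
  · rintro ⟨rfl, rfl⟩
    rfl

lemma mk2_decomp (x : H2 H) : mk2 (proj1 x) (proj2 x) = x := rfl

lemma inner_mk2 (a b c d : H) : ⟪mk2 a b, mk2 c d⟫_ℂ = ⟪a, c⟫_ℂ + ⟪b, d⟫_ℂ :=
  WithLp.prod_inner_apply _ _

lemma decomp2 (x : H2 H) : inc1 (proj1 x) + inc2 (proj2 x) = x := by
  rw [inc1_eq, inc2_eq, mk2_add, add_zero, zero_add, mk2_decomp]

lemma blk21_apply (B : H2 H →L[ℂ] H2 H) (f : H) : blk21 B f = proj2 (B (inc1 f)) := rfl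

lemma blk11_apply (B : H2 H →L[ℂ] H2 H) (f : H) : blk11 B f = proj1 (B (inc1 f)) := rfl

lemma blk21_mul (B C : H2 H →L[ℂ] H2 H) :
    blk21 (B * C) = blk21 B ∘L blk11 C + blk22 B ∘L blk21 C := by
  ext f
  have h := decomp2 (C (inc1 f))
  calc blk21 (B * C) f = proj2 (B (C (inc1 f))) := rfl
    _ = proj2 (B (inc1 (proj1 (C (inc1 f))) + inc2 (proj2 (C (inc1 f))))) := by rw [h]
    _ = _ := by rw [map_add, map_add]; rfl

lemma blk21_one : blk21 (1 : H2 H →L[ℂ] H2 H) = 0 := by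
  ext f
  show proj2 (inc1 f) = 0
  rfl

lemma blk21_smul (c : ℂ) (B : H2 H →L[ℂ] H2 H) : blk21 (c • B) = c • blk21 B := by
  ext f
  show proj2 ((c • B) (inc1 f)) = c • proj2 (B (inc1 f))
  rw [ContinuousLinearMap.smul_apply, map_smul]

lemma norm_proj1_le (x : H2 H) : ‖proj1 x‖ ≤ ‖x‖ := by
  have h := WithLp.prod_norm_sq_eq_of_L2 x
  have h1 : ‖proj1 x‖ = ‖x.fst‖ := rfl
  rw [h1]
  nlinarith [norm_nonneg x.fst, norm_nonneg x.snd, norm_nonneg x]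

lemma norm_proj2_le (x : H2 H) : ‖proj2 x‖ ≤ ‖x‖ := by
  have h := WithLp.prod_norm_sq_eq_of_L2 x
  have h1 : ‖proj2 x‖ = ‖x.snd‖ := rfl
  rw [h1]
  nlinarith [norm_nonneg x.fst, norm_nonneg x.snd, norm_nonneg x]

lemma norm_inc1 (f : H) : ‖(inc1 f : H2 H)‖ = ‖f‖ := by
  have h := WithLp.prod_norm_sq_eq_of_L2 (inc1 f : H2 H)
  have h1 : ((inc1 f : H2 H)).fst = f := rfl
  have h2 : ((inc1 f : H2 H)).snd = (0 : H) := rfl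
  rw [h1, h2] at h
  simp only [norm_zero] at h
  nlinarith [norm_nonneg f, norm_nonneg (inc1 f : H2 H)]

lemma norm_inc2 (f : H) : ‖(inc2 f : H2 H)‖ = ‖f‖ := by
  have h := WithLp.prod_norm_sq_eq_of_L2 (inc2 f : H2 H)
  have h1 : ((inc2 f : H2 H)).fst = (0 : H) := rfl
  have h2 : ((inc2 f : H2 H)).snd = f := rfl
  rw [h1, h2] at h
  simp only [norm_zero] at h
  nlinarith [norm_nonneg f, norm_nonneg (inc2 f : H2 H)]

lemma norm_pow_le_succ_norm (A : H2 H →L[ℂ] H2 H) (n : ℕ) : ‖A ^ n‖ ≤ (‖A‖ + 1) ^ n := by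
  induction n with
  | zero =>
    rw [pow_zero, pow_zero]
    exact le_trans ContinuousLinearMap.norm_id_le (le_refl 1)
  | succ n ih =>
    rw [pow_succ, pow_succ]
    calc ‖A ^ n * A‖ ≤ ‖A ^ n‖ * ‖A‖ := norm_mul_le _ _
      _ ≤ (‖A‖ + 1) ^ n * (‖A‖ + 1) := by
          refine mul_le_mul ih (by linarith [norm_nonneg A]) (norm_nonneg A) (by positivity)

lemma norm_blk11_le (B : H2 H →L[ℂ] H2 H) : ‖blk11 B‖ ≤ ‖B‖ := by
  refine ContinuousLinearMap.opNorm_le_bound _ (norm_nonneg B) fun f => ?_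
  calc ‖blk11 B f‖ = ‖proj1 (B (inc1 f))‖ := rfl
    _ ≤ ‖B (inc1 f)‖ := norm_proj1_le _
    _ ≤ ‖B‖ * ‖(inc1 f : H2 H)‖ := B.le_opNorm _
    _ = ‖B‖ * ‖f‖ := by rw [norm_inc1]

lemma norm_blk22_le (B : H2 H →L[ℂ] H2 H) : ‖blk22 B‖ ≤ ‖B‖ := by
  refine ContinuousLinearMap.opNorm_le_bound _ (norm_nonneg B) fun f => ?_
  calc ‖blk22 B f‖ = ‖proj2 (B (inc2 f))‖ := rfl
    _ ≤ ‖B (inc2 f)‖ := norm_proj2_le _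
    _ ≤ ‖B‖ * ‖(inc2 f : H2 H)‖ := B.le_opNorm _
    _ = ‖B‖ * ‖f‖ := by rw [norm_inc2]

end Blocks

section HS

variable {ι : Type*} (b : HilbertBasis ι ℂ H)

/-- A quantitative Hilbert–Schmidt bound. -/
def HSBnd (X : H →L[ℂ] H) (C : ℝ) : Prop :=
  0 ≤ C ∧ ∀ F : Finset ι, ∑ i ∈ F, ‖X (b i)‖ ^ 2 ≤ C ^ 2

lemma parseval_hasSum (x : H) :
    HasSum (fun i => ‖⟪b i, x⟫_ℂ‖ ^ 2) (‖x‖ ^ 2) := by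
  have h := b.hasSum_inner_mul_inner x x
  have hfun : (fun i => ⟪x, b i⟫_ℂ * ⟪b i, x⟫_ℂ)
      = fun i => ((‖⟪b i, x⟫_ℂ‖ ^ 2 : ℝ) : ℂ) := by
    funext i
    rw [← inner_conj_symm x (b i), mul_comm, Complex.mul_conj]
    norm_cast
    rw [Complex.normSq_eq_norm_sq]
  have hxx : ⟪x, x⟫_ℂ = ((‖x‖ ^ 2 : ℝ) : ℂ) := by
    rw [inner_self_eq_norm_sq_to_K]
    exact_mod_cast rfl
  rw [hfun, hxx] at h
  exact Complex.hasSum_ofReal.mp h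

lemma parseval_sum_le (x : H) (F : Finset ι) :
    ∑ i ∈ F, ‖⟪b i, x⟫_ℂ‖ ^ 2 ≤ ‖x‖ ^ 2 :=
  sum_le_hasSum F (fun _ _ => sq_nonneg _) (parseval_hasSum b x)

lemma HSBnd.summable {X : H →L[ℂ] H} {C : ℝ} (h : HSBnd b X C) :
    Summable fun i => ‖X (b i)‖ ^ 2 :=
  summable_of_sum_le (fun _ => sq_nonneg _) h.2

lemma HSBnd.adjoint {X : H →L[ℂ] H} {C : ℝ} (h : HSBnd b X C) :
    HSBnd b (ContinuousLinearMap.adjoint X) C := by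
  refine ⟨h.1, fun F => ?_⟩
  have hsumX := h.summable b
  have htX : ∑' j, ‖X (b j)‖ ^ 2 ≤ C ^ 2 := Summable.tsum_le_of_sum_le hsumX h.2
  have hsum1 : ∀ i : ι, Summable fun j => ‖⟪b i, X (b j)⟫_ℂ‖ ^ 2 := by
    intro i
    refine hsumX.of_nonneg_of_le (fun _ => sq_nonneg _) (fun j => ?_)
    have h1 : ‖⟪b i, X (b j)⟫_ℂ‖ ≤ ‖X (b j)‖ := by
      calc ‖⟪b i, X (b j)⟫_ℂ‖ ≤ ‖b i‖ * ‖X (b j)‖ := norm_inner_le_norm _ _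
        _ = ‖X (b j)‖ := by rw [b.orthonormal.1 i, one_mul]
    nlinarith [norm_nonneg (⟪b i, X (b j)⟫_ℂ)]
  calc ∑ i ∈ F, ‖ContinuousLinearMap.adjoint X (b i)‖ ^ 2
      = ∑ i ∈ F, ∑' j, ‖⟪b i, X (b j)⟫_ℂ‖ ^ 2 := by
        refine Finset.sum_congr rfl fun i _ => ?_
        rw [← (parseval_hasSum b (ContinuousLinearMap.adjoint X (b i))).tsum_eq]
        congr 1
        funext j
        rw [ContinuousLinearMap.adjoint_inner_right, norm_inner_symm]
    _ = ∑' j, ∑ i ∈ F, ‖⟪b i, X (b j)⟫_ℂ‖ ^ 2 :=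
        (Summable.tsum_finsetSum (fun i _ => hsum1 i)).symm
    _ ≤ ∑' j, ‖X (b j)‖ ^ 2 := by
        refine Summable.tsum_le_tsum (fun j => parseval_sum_le b (X (b j)) F) ?_ hsumX
        exact summable_sum (fun i _ => hsum1 i)
    _ ≤ C ^ 2 := htX

lemma HSBnd.comp_left {X : H →L[ℂ] H} {C : ℝ} (h : HSBnd b X C) (Y : H →L[ℂ] H) :
    HSBnd b (Y ∘L X) (‖Y‖ * C) := by
  refine ⟨mul_nonneg (norm_nonneg _) h.1, fun F => ?_⟩
  calc ∑ i ∈ F, ‖(Y ∘L X) (b i)‖ ^ 2 ≤ ∑ i ∈ F, ‖Y‖ ^ 2 * ‖X (b i)‖ ^ 2 := by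
        refine Finset.sum_le_sum fun i _ => ?_
        have h1 : ‖(Y ∘L X) (b i)‖ ≤ ‖Y‖ * ‖X (b i)‖ := Y.le_opNorm (X (b i))
        calc ‖(Y ∘L X) (b i)‖ ^ 2 ≤ (‖Y‖ * ‖X (b i)‖) ^ 2 :=
              pow_le_pow_left₀ (norm_nonneg _) h1 2
          _ = ‖Y‖ ^ 2 * ‖X (b i)‖ ^ 2 := mul_pow _ _ _
    _ = ‖Y‖ ^ 2 * ∑ i ∈ F, ‖X (b i)‖ ^ 2 := by rw [Finset.mul_sum]
    _ ≤ ‖Y‖ ^ 2 * C ^ 2 := by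
        exact mul_le_mul_of_nonneg_left (h.2 F) (sq_nonneg _)
    _ = (‖Y‖ * C) ^ 2 := by ring

lemma HSBnd.comp_right {X : H →L[ℂ] H} {C : ℝ} (h : HSBnd b X C) (Y : H →L[ℂ] H) :
    HSBnd b (X ∘L Y) (‖Y‖ * C) := by
  have h1 := (h.adjoint b).comp_left b (ContinuousLinearMap.adjoint Y)
  have h2 := h1.adjoint b
  rw [← ContinuousLinearMap.adjoint_comp, ContinuousLinearMap.adjoint_adjoint] at h2
  rwa [ContinuousLinearMap.adjoint.norm_map] at h2

lemma HSBnd.mono {X : H →L[ℂ] H} {C D : ℝ} (h : HSBnd b X C) (hCD : C ≤ D) :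
    HSBnd b X D := by
  refine ⟨le_trans h.1 hCD, fun F => le_trans (h.2 F) ?_⟩
  nlinarith [h.1]

lemma HSBnd.add {X Y : H →L[ℂ] H} {C D : ℝ} (hX : HSBnd b X C) (hY : HSBnd b Y D) :
    HSBnd b (X + Y) (C + D) := by
  refine ⟨add_nonneg hX.1 hY.1, fun F => ?_⟩
  have hCS := Finset.sum_mul_sq_le_sq_mul_sq F (fun i => ‖X (b i)‖) (fun i => ‖Y (b i)‖)
  have hX2 := hX.2 F
  have hY2 := hY.2 F
  have hcross : ∑ i ∈ F, ‖X (b i)‖ * ‖Y (b i)‖ ≤ C * D := by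
    have hnn : (0:ℝ) ≤ ∑ i ∈ F, ‖X (b i)‖ * ‖Y (b i)‖ :=
      Finset.sum_nonneg fun i _ => mul_nonneg (norm_nonneg _) (norm_nonneg _)
    have hsq : (∑ i ∈ F, ‖X (b i)‖ * ‖Y (b i)‖) ^ 2 ≤ (C * D) ^ 2 := by
      calc (∑ i ∈ F, ‖X (b i)‖ * ‖Y (b i)‖) ^ 2
          ≤ (∑ i ∈ F, ‖X (b i)‖ ^ 2) * ∑ i ∈ F, ‖Y (b i)‖ ^ 2 := hCS
        _ ≤ C ^ 2 * D ^ 2 := by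
            refine mul_le_mul hX2 hY2 (Finset.sum_nonneg fun i _ => sq_nonneg _) (sq_nonneg _)
        _ = (C * D) ^ 2 := by ring
    nlinarith [mul_nonneg hX.1 hY.1]
  calc ∑ i ∈ F, ‖(X + Y) (b i)‖ ^ 2
      ≤ ∑ i ∈ F, (‖X (b i)‖ ^ 2 + 2 * (‖X (b i)‖ * ‖Y (b i)‖) + ‖Y (b i)‖ ^ 2) := by
        refine Finset.sum_le_sum fun i _ => ?_
        have h1 : ‖(X + Y) (b i)‖ ≤ ‖X (b i)‖ + ‖Y (b i)‖ := by
          rw [ContinuousLinearMap.add_apply]; exact norm_add_le _ _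
        nlinarith [norm_nonneg ((X + Y) (b i))]
    _ = (∑ i ∈ F, ‖X (b i)‖ ^ 2) + 2 * (∑ i ∈ F, ‖X (b i)‖ * ‖Y (b i)‖)
          + ∑ i ∈ F, ‖Y (b i)‖ ^ 2 := by
        rw [Finset.sum_add_distrib, Finset.sum_add_distrib, Finset.mul_sum]
    _ ≤ C ^ 2 + 2 * (C * D) + D ^ 2 := by
        have : (0:ℝ) ≤ 2 := by norm_num
        gcongr
    _ = (C + D) ^ 2 := by ring

lemma HSBnd.smul {X : H →L[ℂ] H} {C : ℝ} (h : HSBnd b X C) (c : ℂ) :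
    HSBnd b (c • X) (‖c‖ * C) := by
  refine ⟨mul_nonneg (norm_nonneg _) h.1, fun F => ?_⟩
  calc ∑ i ∈ F, ‖(c • X) (b i)‖ ^ 2 = ∑ i ∈ F, ‖c‖ ^ 2 * ‖X (b i)‖ ^ 2 := by
        refine Finset.sum_congr rfl fun i _ => ?_
        rw [ContinuousLinearMap.smul_apply, norm_smul]
        ring
    _ = ‖c‖ ^ 2 * ∑ i ∈ F, ‖X (b i)‖ ^ 2 := by rw [Finset.mul_sum]
    _ ≤ ‖c‖ ^ 2 * C ^ 2 := mul_le_mul_of_nonneg_left (h.2 F) (sq_nonneg _)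
    _ = (‖c‖ * C) ^ 2 := by ring

lemma HSBnd.zero : HSBnd b (0 : H →L[ℂ] H) 0 := by
  refine ⟨le_refl _, fun F => ?_⟩
  simp

lemma isHS_of_series (X : H →L[ℂ] H) (u : ℕ → H →L[ℂ] H) (c : ℕ → ℝ)
    (hb : ∀ n, HSBnd b (u n) (c n)) (hc : Summable c)
    (hX : ∀ y : H, HasSum (fun n => u n y) (X y)) : IsHS b X := by
  classical
  have hcn : ∀ n, 0 ≤ c n := fun n => (hb n).1
  have hui : ∀ n i, ‖u n (b i)‖ ≤ c n := by
    intro n i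
    have h2 := (hb n).2 {i}
    rw [Finset.sum_singleton] at h2
    nlinarith [norm_nonneg (u n (b i)), hcn n]
  have hsumn : ∀ i, Summable fun n => ‖u n (b i)‖ := fun i =>
    hc.of_nonneg_of_le (fun _ => norm_nonneg _) (fun n => hui n i)
  have hXle : ∀ i, ‖X (b i)‖ ≤ ∑' n, ‖u n (b i)‖ := by
    intro i
    rw [← (hX (b i)).tsum_eq]
    exact norm_tsum_le_tsum_norm (hsumn i)
  show Summable fun i => ‖X (b i)‖ ^ 2
  refine summable_of_sum_le (c := (∑' n, c n) ^ 2) (fun i => sq_nonneg _) (fun F => ?_)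
  set v : ℕ → EuclideanSpace ℝ F := fun n => WithLp.toLp 2 (fun i : F => ‖u n (b i)‖) with hv
  have hvnorm : ∀ n, ‖v n‖ ≤ c n := by
    intro n
    rw [EuclideanSpace.norm_eq]
    have hle : ∑ i : F, ‖v n i‖ ^ 2 ≤ (c n) ^ 2 := by
      have : ∀ i : F, ‖v n i‖ ^ 2 = ‖u n (b (i : ι))‖ ^ 2 := by
        intro i
        rw [hv]
        simp [Real.norm_eq_abs, sq_abs]
      rw [Finset.sum_congr rfl (fun i _ => this i)]
      rw [Finset.sum_coe_sort F (fun i => ‖u n (b i)‖ ^ 2)]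
      exact (hb n).2 F
    calc Real.sqrt (∑ i : F, ‖v n i‖ ^ 2) ≤ Real.sqrt ((c n) ^ 2) :=
          Real.sqrt_le_sqrt hle
      _ = c n := Real.sqrt_sq (hcn n)
  have hvnsum : Summable fun n => ‖v n‖ :=
    hc.of_nonneg_of_le (fun _ => norm_nonneg _) hvnorm
  have hvsum : Summable v := Summable.of_norm hvnsum
  set w : EuclideanSpace ℝ F := ∑' n, v n with hw
  have hwi : ∀ i : F, w i = ∑' n, ‖u n (b (i : ι))‖ := by
    intro i
    have h1 := hvsum.hasSum.mapL (EuclideanSpace.proj (𝕜 := ℝ) i)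
    have h2 : (EuclideanSpace.proj (𝕜 := ℝ) i) w = w i := rfl
    rw [← h2, ← h1.tsum_eq]
    rfl
  have hwnn : ∀ i : F, 0 ≤ w i := by
    intro i
    rw [hwi i]
    exact tsum_nonneg (fun n => norm_nonneg _)
  calc ∑ i ∈ F, ‖X (b i)‖ ^ 2 = ∑ i : F, ‖X (b (i : ι))‖ ^ 2 :=
        (Finset.sum_coe_sort F (fun i => ‖X (b i)‖ ^ 2)).symm
    _ ≤ ∑ i : F, (w i) ^ 2 := by
        refine Finset.sum_le_sum fun i _ => ?_
        have h1 : ‖X (b (i : ι))‖ ≤ w i := by rw [hwi i]; exact hXle i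
        nlinarith [norm_nonneg (X (b (i : ι)))]
    _ = ‖w‖ ^ 2 := by
        rw [EuclideanSpace.norm_eq, Real.sq_sqrt (Finset.sum_nonneg fun i _ => sq_nonneg _)]
        refine Finset.sum_congr rfl fun i _ => ?_
        rw [Real.norm_eq_abs, sq_abs]
    _ ≤ (∑' n, c n) ^ 2 := by
        have h1 : ‖w‖ ≤ ∑' n, ‖v n‖ := norm_tsum_le_tsum_norm hvnsum
        have h2 : ∑' n, ‖v n‖ ≤ ∑' n, c n := Summable.tsum_le_tsum hvnorm hvnsum hc
        nlinarith [norm_nonneg w, (tsum_nonneg (fun n => norm_nonneg (v n)) : (0:ℝ) ≤ ∑' n, ‖v n‖)]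

lemma summable_n_pow_div_factorial (x : ℝ) :
    Summable (fun n : ℕ => (n : ℝ) * x ^ n / (Nat.factorial n : ℝ)) := by
  rw [← summable_nat_add_iff 1]
  have hfun : (fun n : ℕ => ((n + 1 : ℕ) : ℝ) * x ^ (n + 1) / (Nat.factorial (n + 1) : ℝ))
      = fun n : ℕ => x * (x ^ n / (Nat.factorial n : ℝ)) := by
    funext n
    rw [Nat.factorial_succ]
    have h1 : ((Nat.factorial n : ℝ)) ≠ 0 := Nat.cast_ne_zero.2 (Nat.factorial_ne_zero n)
    have h2 : ((n + 1 : ℕ) : ℝ) ≠ 0 := Nat.cast_ne_zero.2 (Nat.succ_ne_zero n)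
    push_cast
    field_simp
    ring
  exact hfun ▸ (Real.summable_pow_div_factorial x).mul_left x

end HS

end Aux

open scoped InnerProductSpace in
set_option maxHeartbeats 1000000 in
set_option synthInstance.maxHeartbeats 400000 in
/-- for `Â` with `S* = -S`, `T̄* = T`, `T` Hilbert–Schmidt, the operator `exp(tÂ)`
is symplectic and its lower-left block is Hilbert–Schmidt, i.e. `exp(tÂ) ∈ Sp₂` for all `t`. -/
theorem stmt6 {ι : Type*}
    (Γ : H →ₛₗᵢ[starRingEnd ℂ] H) (hΓ : ∀ x, Γ (Γ x) = x)
    (S T : H →L[ℂ] H) (hS : adjoint S = -S) (hT : conjOp Γ (adjoint T) = T)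
    (b : HilbertBasis ι ℂ H) (hTHS : IsHS b T)
    (Ahat J : H2 H →L[ℂ] H2 H)
    (hA : ∀ φ ψ : H,
      Ahat (mk2 φ ψ) = mk2 (S φ + conjOp Γ T ψ) (T φ + conjOp Γ S ψ))
    (hJ : ∀ φ ψ : H, J (mk2 φ ψ) = mk2 φ (-ψ)) :
    ∀ t : ℝ,
      NormedSpace.exp (t • Ahat) ∘L J ∘L adjoint (NormedSpace.exp (t • Ahat)) = J ∧
      adjoint (NormedSpace.exp (t • Ahat)) ∘L J ∘L NormedSpace.exp (t • Ahat) = J ∧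
      IsHS b (blk21 (NormedSpace.exp (t • Ahat))) := by
  intro t
  have hJJ : ∀ x : H2 H, J (J x) = x := by
    intro x
    rw [← mk2_decomp x, hJ, hJ, neg_neg]
  have hJJ1 : J * J = 1 := by
    ext x
    exact hJJ x
  have hT' : ContinuousLinearMap.adjoint T = conjOp Γ T := by
    have h := congrArg (conjOp Γ) hT
    rwa [conjOp_conjOp Γ hΓ] at h
  have hT'' : ContinuousLinearMap.adjoint (conjOp Γ T) = T := by
    rw [← hT', ContinuousLinearMap.adjoint_adjoint]
  have hSbar : ContinuousLinearMap.adjoint (conjOp Γ S) = -(conjOp Γ S) := by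
    rw [adjoint_conjOp Γ hΓ, hS]
    ext z
    simp [conjOp_apply]
  have hadjA : ContinuousLinearMap.adjoint Ahat = -(J ∘L Ahat ∘L J) := by
    refine ((ContinuousLinearMap.eq_adjoint_iff _ _).2 ?_).symm
    intro x y
    rw [← mk2_decomp x, ← mk2_decomp y]
    set φ := proj1 x
    set ψ := proj2 x
    set φ' := proj1 y
    set ψ' := proj2 y
    have hL : (-(J ∘L Ahat ∘L J)) (mk2 φ ψ)
        = mk2 (conjOp Γ T ψ - S φ) (T φ - conjOp Γ S ψ) := by
      rw [ContinuousLinearMap.neg_apply, ContinuousLinearMap.comp_apply,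
        ContinuousLinearMap.comp_apply, hJ, hA, map_neg, map_neg, hJ, mk2_neg]
      rw [mk2_eq_mk2_iff]
      constructor
      · abel
      · abel
    have hR : Ahat (mk2 φ' ψ') = mk2 (S φ' + conjOp Γ T ψ') (T φ' + conjOp Γ S ψ') := hA _ _
    rw [hL, hR, inner_mk2, inner_mk2, inner_sub_left, inner_sub_left,
      inner_add_right, inner_add_right]
    have h1 : ⟪φ, S φ'⟫_ℂ = -⟪S φ, φ'⟫_ℂ := by
      rw [← ContinuousLinearMap.adjoint_inner_left S, hS, ContinuousLinearMap.neg_apply,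
        inner_neg_left]
    have h2 : ⟪φ, conjOp Γ T ψ'⟫_ℂ = ⟪T φ, ψ'⟫_ℂ := by
      rw [← hT', ContinuousLinearMap.adjoint_inner_right]
    have h3 : ⟪ψ, T φ'⟫_ℂ = ⟪conjOp Γ T ψ, φ'⟫_ℂ := by
      have h3a := ContinuousLinearMap.adjoint_inner_left T φ' ψ
      rw [hT'] at h3a
      exact h3a.symm
    have h4 : ⟪ψ, conjOp Γ S ψ'⟫_ℂ = -⟪conjOp Γ S ψ, ψ'⟫_ℂ := by
      rw [← ContinuousLinearMap.adjoint_inner_left (conjOp Γ S), hSbar,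
        ContinuousLinearMap.neg_apply, inner_neg_left]
    rw [h1, h2, h3, h4]
    ring
  have h1c : t • (1 : ℂ) = (t : ℂ) := by rw [Complex.real_smul, mul_one]
  have hsmul : t • Ahat = (t : ℂ) • Ahat := by rw [← smul_one_smul ℂ t Ahat, h1c]
  rw [hsmul]
  set B : H2 H →L[ℂ] H2 H := (t : ℂ) • Ahat with hB
  have hcomp : J ∘L Ahat ∘L J = J * Ahat * J := by rw [mul_assoc]; rfl
  have hstarA : star Ahat = J * -Ahat * J := by
    rw [ContinuousLinearMap.star_eq_adjoint, hadjA, hcomp]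
    ext x
    simp [ContinuousLinearMap.mul_apply]
  have hstarB : star B = J * -B * J := by
    rw [hB, star_smul, Complex.star_def, Complex.conj_ofReal, hstarA]
    ext x
    simp [ContinuousLinearMap.mul_apply, map_smul]
  let +nondep : NormedAlgebra ℚ (H2 H →L[ℂ] H2 H) := .restrictScalars ℚ ℂ _
  have hstarE : star (NormedSpace.exp B) = J * NormedSpace.exp (-B) * J := by
    rw [NormedSpace.star_exp, hstarB]
    exact NormedSpace.exp_units_conj (⟨J, J, hJJ1, hJJ1⟩ : (H2 H →L[ℂ] H2 H)ˣ) (-B)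
  have hcomm : Commute B (-B) := (Commute.refl B).neg_right
  have hEE : NormedSpace.exp B * NormedSpace.exp (-B) = 1 := by
    rw [← NormedSpace.exp_add_of_commute hcomm, add_neg_cancel, NormedSpace.exp_zero]
  have hEE' : NormedSpace.exp (-B) * NormedSpace.exp B = 1 := by
    rw [← NormedSpace.exp_add_of_commute hcomm.symm, neg_add_cancel, NormedSpace.exp_zero]
  refine ⟨?_, ?_, ?_⟩
  · rw [← ContinuousLinearMap.star_eq_adjoint, hstarE]
    show NormedSpace.exp B * (J * (J * NormedSpace.exp (-B) * J)) = J
    rw [show J * (J * NormedSpace.exp (-B) * J) = NormedSpace.exp (-B) * J from by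
      rw [← mul_assoc, ← mul_assoc, hJJ1, one_mul], ← mul_assoc, hEE, one_mul]
  · rw [← ContinuousLinearMap.star_eq_adjoint, hstarE]
    show (J * NormedSpace.exp (-B) * J) * (J * NormedSpace.exp B) = J
    rw [mul_assoc (J * NormedSpace.exp (-B)) J (J * NormedSpace.exp B),
      ← mul_assoc J J (NormedSpace.exp B), hJJ1, one_mul, mul_assoc, hEE', mul_one]
  · -- Hilbert–Schmidt part
    set M : ℝ := Real.sqrt (∑' i, ‖T (b i)‖ ^ 2) with hM
    have hMnn : 0 ≤ M := Real.sqrt_nonneg _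
    have hTb : HSBnd b T M := by
      refine ⟨hMnn, fun F => ?_⟩
      have h1 : ∑ i ∈ F, ‖T (b i)‖ ^ 2 ≤ ∑' i, ‖T (b i)‖ ^ 2 :=
        Summable.sum_le_tsum F (fun i _ => sq_nonneg _) hTHS
      rwa [hM, Real.sq_sqrt (tsum_nonneg fun i => sq_nonneg _)]
    have hblkT : blk21 Ahat = T := by
      ext f
      rw [blk21_apply, inc1_eq, hA, proj2_mk2, map_zero, add_zero]
    set Q : ℝ := ‖Ahat‖ + 1 with hQ
    have hQ1 : (1:ℝ) ≤ Q := by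
      have := norm_nonneg Ahat
      rw [hQ]
      linarith
    have hAQ : ‖Ahat‖ ≤ Q := by rw [hQ]; linarith
    have hQ0 : (0:ℝ) ≤ Q := by linarith
    have hKey : ∀ n : ℕ, HSBnd b (blk21 (Ahat ^ n)) ((n : ℝ) * M * Q ^ n) := by
      intro n
      induction n with
      | zero =>
        rw [pow_zero, blk21_one]
        refine (HSBnd.zero b).mono b ?_
        simp
      | succ n ih =>
        rw [pow_succ', blk21_mul, hblkT]
        have hterm1 : HSBnd b (T ∘L blk11 (Ahat ^ n)) (Q ^ n * M) := by
          refine ((hTb.comp_right b (blk11 (Ahat ^ n))).mono b ?_)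
          have h2 : ‖blk11 (Ahat ^ n)‖ ≤ Q ^ n := by
            rw [hQ]
            exact le_trans (norm_blk11_le _) (norm_pow_le_succ_norm Ahat n)
          exact mul_le_mul_of_nonneg_right h2 hMnn
        have hterm2 : HSBnd b (blk22 Ahat ∘L blk21 (Ahat ^ n)) (Q * ((n:ℝ) * M * Q ^ n)) := by
          refine (ih.comp_left b (blk22 Ahat)).mono b ?_
          refine mul_le_mul_of_nonneg_right (le_trans (norm_blk22_le _) hAQ) ?_
          positivity
        refine ((hterm1.add b hterm2)).mono b ?_
        have hQn : (0:ℝ) ≤ Q ^ n := by positivity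
        push_cast
        have hQpow : Q ^ (n + 1) = Q * Q ^ n := by rw [pow_succ]; ring
        rw [hQpow]
        nlinarith [hMnn, hQ1, hQn, mul_nonneg hMnn hQn]
    set c : ℕ → ℝ := fun n => (Nat.factorial n : ℝ)⁻¹ * |t| ^ n * ((n : ℝ) * M * Q ^ n)
      with hcdef
    have hub : ∀ n,
        HSBnd b (blk21 ((Nat.factorial n : ℂ)⁻¹ • ((t:ℂ) • Ahat) ^ n)) (c n) := by
      intro n
      rw [smul_pow, smul_smul, blk21_smul]
      have h5 := (hKey n).smul b ((Nat.factorial n : ℂ)⁻¹ * (t:ℂ) ^ n)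
      refine h5.mono b (le_of_eq ?_)
      rw [hcdef]
      rw [norm_mul, norm_inv, norm_pow, Complex.norm_natCast, Complex.norm_real,
        Real.norm_eq_abs]
      try ring
    have hcsum : Summable c := by
      have hle : ∀ n, c n ≤ M * ((n:ℝ) * (Q * |t|) ^ n / (Nat.factorial n : ℝ)) := by
        intro n
        rw [hcdef]
        rw [mul_pow, div_eq_mul_inv]
        exact le_of_eq (by ring)
      refine Summable.of_nonneg_of_le (fun n => ?_) hle
        ((summable_n_pow_div_factorial (Q * |t|)).mul_left M)
      rw [hcdef]
      have h6 : (0:ℝ) ≤ (Nat.factorial n : ℝ)⁻¹ := by positivity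
      positivity
    refine isHS_of_series b _
      (fun n => blk21 ((Nat.factorial n : ℂ)⁻¹ • ((t:ℂ) • Ahat) ^ n)) c hub hcsum ?_
    intro y
    have h2 : NormedSpace.exp ((t:ℂ) • Ahat)
        = ∑' n, (Nat.factorial n : ℂ)⁻¹ • ((t:ℂ) • Ahat) ^ n := by
      rw [NormedSpace.exp_eq_tsum (𝕂 := ℂ)]
    have h1 := (NormedSpace.expSeries_summable' (𝕂 := ℂ) ((t:ℂ) • Ahat)).hasSum
    rw [← h2] at h1
    have h3 := h1.mapL (ContinuousLinearMap.apply ℂ (H2 H) (inc1 y))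
    exact h3.mapL proj2
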